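/- Let U ⊆ ℝᵐ be a nonempty compact set, t > 0, and f : [0,t] × U → ℝ a continuous function. Then sup { ∫_0^t f(τ, u(τ)) dτ : u : [0,t] → U measurable } = ∫_0^t max_{v ∈ U} f(τ, v) dτ, and the supremum is attained by some measurable u : [0,t] → U. -/

import Mathlib

open MeasureTheory

open Filter Topology in
/-- A Kuratowski–Ryll-Nardzewski style measurable selection lemma for closed-valued
multifunctions `A : ℝ → Set (Fin m → ℝ)` whose "hit sets" of closed balls are measurable. -/
lemma measurable_selection_aux {m : ℕ} (A : ℝ → Set (Fin m → ℝ))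
    (hne : ∀ τ, (A τ).Nonempty) (hcl : ∀ τ, IsClosed (A τ))
    (hmeas : ∀ (w : Fin m → ℝ) (r : ℝ), 0 < r → MeasurableSet {τ | ∃ a ∈ A τ, dist a w ≤ r}) :
    ∃ u : ℝ → (Fin m → ℝ), Measurable u ∧ ∀ τ, u τ ∈ A τ := by
  classical
  obtain ⟨w, hw⟩ : ∃ w : ℕ → (Fin m → ℝ), DenseRange w :=
    ⟨TopologicalSpace.denseSeq _, TopologicalSpace.denseRange_denseSeq _⟩
  set q : ℝ := (1 / 2 : ℝ) with hq
  have hqpos : ∀ n : ℕ, (0 : ℝ) < q ^ n := fun n => pow_pos (by norm_num) n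
  set good : ℝ → ℕ → ℕ → Prop := fun τ n k => ∃ a ∈ A τ, dist a (w k) ≤ q ^ n with hgood_def
  have hTmeas : ∀ n k, MeasurableSet {τ | good τ n k} := fun n k => hmeas (w k) _ (hqpos n)
  have h0 : ∀ τ, ∃ k, good τ 0 k := by
    intro τ
    obtain ⟨a, ha⟩ := hne τ
    obtain ⟨k, hk⟩ := hw.exists_dist_lt a one_pos
    exact ⟨k, a, ha, by simpa using hk.le⟩
  have hstep : ∀ (n : ℕ) (p : ℕ) (τ : ℝ), ∃ k, good τ (n + 1) k ∧
      (good τ n p → dist (w k) (w p) ≤ q ^ n + q ^ (n + 1)) := by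
    intro n p τ
    by_cases hp : good τ n p
    · obtain ⟨a, ha, hap⟩ := hp
      obtain ⟨k, hk⟩ := hw.exists_dist_lt a (hqpos (n + 1))
      refine ⟨k, ⟨a, ha, hk.le⟩, fun _ => ?_⟩
      calc dist (w k) (w p) ≤ dist (w k) a + dist a (w p) := dist_triangle _ _ _
        _ ≤ q ^ (n + 1) + q ^ n := add_le_add (by rw [dist_comm]; exact hk.le) hap
        _ = q ^ n + q ^ (n + 1) := by ring
    · obtain ⟨a, ha⟩ := hne τ
      obtain ⟨k, hk⟩ := hw.exists_dist_lt a (hqpos (n + 1))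
      exact ⟨k, ⟨a, ha, hk.le⟩, fun h => absurd h hp⟩
  set kk : ℕ → ℝ → ℕ := fun n => Nat.rec (motive := fun _ => ℝ → ℕ)
      (fun τ => Nat.find (h0 τ)) (fun n prev τ => Nat.find (hstep n (prev τ) τ)) n with hkk
  have hkkS : ∀ n τ, kk (n + 1) τ = Nat.find (hstep n (kk n τ) τ) := fun n τ => rfl
  have hgood' : ∀ n τ, good τ n (kk n τ) := by
    intro n
    induction n with
    | zero => exact fun τ => Nat.find_spec (h0 τ)
    | succ n ih => exact fun τ => (Nat.find_spec (hstep n (kk n τ) τ)).1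
  have hdist : ∀ n τ, dist (w (kk (n + 1) τ)) (w (kk n τ)) ≤ q ^ n + q ^ (n + 1) :=
    fun n τ => (Nat.find_spec (hstep n (kk n τ) τ)).2 (hgood' n τ)
  have hkkmeas : ∀ n, Measurable (kk n) := by
    intro n
    induction n with
    | zero => exact measurable_find _ fun k => hTmeas 0 k
    | succ n ih =>
      have heq : kk (n + 1) = fun τ => Nat.find (hstep n (kk n τ) τ) := rfl
      rw [heq]
      refine measurable_find (fun τ => hstep n (kk n τ) τ) (fun k => ?_)
      have hset : {τ | good τ (n + 1) k ∧
          (good τ n (kk n τ) → dist (w k) (w (kk n τ)) ≤ q ^ n + q ^ (n + 1))}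
          = {τ | good τ (n + 1) k} ∩ kk n ⁻¹' {j | dist (w k) (w j) ≤ q ^ n + q ^ (n + 1)} := by
        ext τ
        simp only [Set.mem_setOf_eq, Set.mem_inter_iff, Set.mem_preimage]
        exact and_congr_right fun _ => ⟨fun h => h (hgood' n τ), fun h _ => h⟩
      rw [hset]
      exact (hTmeas (n + 1) k).inter (ih ((Set.to_countable _).measurableSet))
  have humeas : ∀ n, Measurable fun τ => w (kk n τ) :=
    fun n => (measurable_from_top (f := w)).comp (hkkmeas n)
  have hcauchy : ∀ τ, CauchySeq fun n => w (kk n τ) := by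
    intro τ
    refine cauchySeq_of_le_geometric q 2 (by norm_num) (fun n => ?_)
    have h1 := hdist n τ
    rw [dist_comm] at h1
    have h2 : q ^ (n + 1) ≤ q ^ n :=
      pow_le_pow_of_le_one (by norm_num) (by norm_num) (by omega)
    linarith
  choose u hu using fun τ => cauchySeq_tendsto_of_complete (hcauchy τ)
  have humeas' : Measurable u :=
    measurable_of_tendsto_metrizable humeas (tendsto_pi_nhds.2 hu)
  refine ⟨u, humeas', fun τ => ?_⟩
  have haux : ∀ n, ∃ a ∈ A τ, dist a (w (kk n τ)) ≤ q ^ n := fun n => hgood' n τ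
  choose a haA had using haux
  have hta : Tendsto a atTop (𝓝 (u τ)) := by
    rw [tendsto_iff_dist_tendsto_zero]
    refine squeeze_zero (g := fun n => q ^ n + dist (w (kk n τ)) (u τ)) (fun n => dist_nonneg) (fun n => ?_) ?_
    · calc dist (a n) (u τ) ≤ dist (a n) (w (kk n τ)) + dist (w (kk n τ)) (u τ) :=
            dist_triangle _ _ _
        _ ≤ q ^ n + dist (w (kk n τ)) (u τ) := add_le_add (had n) le_rfl
    · have h1 : Tendsto (fun n : ℕ => q ^ n) atTop (𝓝 0) :=
        tendsto_pow_atTop_nhds_zero_of_lt_one (by norm_num) (by norm_num)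
      have h2 : Tendsto (fun n => dist (w (kk n τ)) (u τ)) atTop (𝓝 0) :=
        tendsto_iff_dist_tendsto_zero.mp (hu τ)
      simpa using h1.add h2
  exact (hcl τ).mem_of_tendsto hta (Filter.Eventually.of_forall haA)

/-- Let `U ⊆ ℝᵐ` be nonempty and compact, `t > 0`, and `f : [0,t] × U → ℝ` continuous.  Then
`sup { ∫_0^t f(τ, u(τ)) dτ : u : [0,t] → U measurable } = ∫_0^t max_{v ∈ U} f(τ, v) dτ`,
and the supremum is attained by some measurable `u : [0,t] → U`. -/
theorem stmt9 (m : ℕ) (U : Set (Fin m → ℝ)) (hUne : U.Nonempty) (hUcp : IsCompact U)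
    (t : ℝ) (ht : 0 < t) (f : ℝ → (Fin m → ℝ) → ℝ)
    (hf : ContinuousOn (fun p : ℝ × (Fin m → ℝ) => f p.1 p.2) (Set.Icc 0 t ×ˢ U)) :
    IsGreatest
      {I : ℝ | ∃ u : ℝ → Fin m → ℝ, Measurable u ∧ (∀ τ ∈ Set.Icc (0 : ℝ) t, u τ ∈ U) ∧
        I = ∫ τ in (0 : ℝ)..t, f τ (u τ)}
      (∫ τ in (0 : ℝ)..t, ⨆ v : U, f τ (v : Fin m → ℝ)) := by
  classical
  have hsclosed : IsClosed (Set.Icc (0 : ℝ) t ×ˢ U) := isClosed_Icc.prod hUcp.isClosed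
  obtain ⟨G, hG⟩ := ContinuousMap.exists_restrict_eq (Y := ℝ) hsclosed
    ⟨(Set.Icc (0 : ℝ) t ×ˢ U).restrict (fun p => f p.1 p.2), hf.restrict⟩
  have hGf : ∀ (τ : ℝ) (v : Fin m → ℝ), τ ∈ Set.Icc (0 : ℝ) t → v ∈ U → G (τ, v) = f τ v := by
    intro τ v hτ hv
    exact DFunLike.congr_fun hG ⟨(τ, v), ⟨hτ, hv⟩⟩
  have hGc : Continuous fun p : ℝ × (Fin m → ℝ) => G (p.1, p.2) :=
    G.continuous.comp (continuous_fst.prodMk continuous_snd)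
  have hGc1 : ∀ τ : ℝ, Continuous fun v : Fin m → ℝ => G (τ, v) :=
    fun τ => G.continuous.comp (continuous_const.prodMk continuous_id)
  set M : ℝ → ℝ := fun τ => sSup ((fun v => G (τ, v)) '' U) with hM
  have hMc : Continuous M := hUcp.continuous_sSup (f := fun τ v => G (τ, v)) hGc
  have hbdd : ∀ (τ : ℝ) (K : Set (Fin m → ℝ)), IsCompact K →
      BddAbove ((fun v => G (τ, v)) '' K) :=
    fun τ K hK => hK.bddAbove_image (hGc1 τ).continuousOn
  have hle : ∀ (τ : ℝ) (v : Fin m → ℝ), v ∈ U → G (τ, v) ≤ M τ :=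
    fun τ v hv => le_csSup (hbdd τ U hUcp) ⟨v, hv, rfl⟩
  set A : ℝ → Set (Fin m → ℝ) := fun τ => U ∩ {v | G (τ, v) = M τ} with hA
  have hAne : ∀ τ, (A τ).Nonempty := by
    intro τ
    obtain ⟨x, hx, hsup⟩ := hUcp.exists_sSup_image_eq hUne (hGc1 τ).continuousOn
    exact ⟨x, hx, hsup.symm⟩
  have hAcl : ∀ τ, IsClosed (A τ) :=
    fun τ => hUcp.isClosed.inter (isClosed_eq (hGc1 τ) continuous_const)
  have hTmeas : ∀ (w0 : Fin m → ℝ) (r : ℝ), 0 < r →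
      MeasurableSet {τ | ∃ a ∈ A τ, dist a w0 ≤ r} := by
    intro w0 r _
    set K : Set (Fin m → ℝ) := U ∩ Metric.closedBall w0 r with hK
    have hKcp : IsCompact K := hUcp.inter_right Metric.isClosed_closedBall
    rcases K.eq_empty_or_nonempty with hKe | hKne
    · have : {τ | ∃ a ∈ A τ, dist a w0 ≤ r} = (∅ : Set ℝ) := by
        ext τ
        simp only [Set.mem_setOf_eq, Set.mem_empty_iff_false, iff_false, not_exists]
        rintro a ⟨⟨haU, -⟩, hd⟩
        have : a ∈ K := ⟨haU, Metric.mem_closedBall.mpr hd⟩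
        simp [hKe] at this
      rw [this]; exact MeasurableSet.empty
    · have hKU : K ⊆ U := Set.inter_subset_left
      have hsetEq : {τ | ∃ a ∈ A τ, dist a w0 ≤ r}
          = {τ | sSup ((fun v => G (τ, v)) '' K) = M τ} := by
        ext τ
        constructor
        · rintro ⟨a, ⟨⟨haU, haM⟩, hd⟩⟩
          have h1 : sSup ((fun v => G (τ, v)) '' K) ≤ M τ := by
            refine csSup_le (hKne.image _) ?_
            rintro x ⟨v, hvK, rfl⟩
            exact hle τ v (hKU hvK)
          have h2 : M τ ≤ sSup ((fun v => G (τ, v)) '' K) := by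
            rw [← haM]
            exact le_csSup (hbdd τ K hKcp) ⟨a, ⟨haU, Metric.mem_closedBall.mpr hd⟩, rfl⟩
          exact le_antisymm h1 h2
        · intro h
          obtain ⟨x, hxK, hx⟩ := hKcp.exists_sSup_image_eq hKne (hGc1 τ).continuousOn
          exact ⟨x, ⟨hxK.1, hx.symm.trans h⟩, Metric.mem_closedBall.mp hxK.2⟩
      rw [hsetEq]
      exact (isClosed_eq (hKcp.continuous_sSup (f := fun τ v => G (τ, v)) hGc) hMc).measurableSet
  obtain ⟨u₀, hu₀m, hu₀A⟩ := measurable_selection_aux A hAne hAcl hTmeas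
  -- on [0, t] the integrand of the right-hand side coincides with M
  have hsup_eq : ∀ τ ∈ Set.Icc (0 : ℝ) t, (⨆ v : U, f τ (v : Fin m → ℝ)) = M τ := by
    intro τ hτ
    have h1 : (⨆ v : U, f τ (v : Fin m → ℝ)) = ⨆ v : U, G (τ, (v : Fin m → ℝ)) := by
      refine iSup_congr fun v => (hGf τ v hτ v.2).symm
    rw [h1]
    show (⨆ v : U, G (τ, (v : Fin m → ℝ))) = sSup ((fun v => G (τ, v)) '' U)
    rw [Set.image_eq_range]
    rfl
  constructor
  · -- membership: the supremum is attained by u₀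
    refine ⟨u₀, hu₀m, fun τ _ => (hu₀A τ).1, ?_⟩
    refine intervalIntegral.integral_congr fun τ hτ => ?_
    rw [Set.uIcc_of_le ht.le] at hτ
    have h1 : G (τ, u₀ τ) = M τ := (hu₀A τ).2
    rw [hsup_eq τ hτ, ← h1, hGf τ (u₀ τ) hτ (hu₀A τ).1]
  · -- upper bound
    rintro I ⟨u, hum, huU, rfl⟩
    have e1 : (∫ τ in (0 : ℝ)..t, f τ (u τ)) = ∫ τ in (0 : ℝ)..t, G (τ, u τ) := by
      refine intervalIntegral.integral_congr fun τ hτ => ?_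
      rw [Set.uIcc_of_le ht.le] at hτ
      exact (hGf τ (u τ) hτ (huU τ hτ)).symm
    have e2 : (∫ τ in (0 : ℝ)..t, ⨆ v : U, f τ (v : Fin m → ℝ)) = ∫ τ in (0 : ℝ)..t, M τ := by
      refine intervalIntegral.integral_congr fun τ hτ => ?_
      rw [Set.uIcc_of_le ht.le] at hτ
      exact hsup_eq τ hτ
    rw [e1, e2]
    obtain ⟨C, hC⟩ := ((isCompact_Icc (a := (0:ℝ)) (b := t)).prod hUcp).exists_bound_of_continuousOn
      (f := fun p : ℝ × (Fin m → ℝ) => G (p.1, p.2)) hGc.continuousOn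
    have hint1 : IntervalIntegrable (fun τ => G (τ, u τ)) volume 0 t := by
      rw [intervalIntegrable_iff_integrableOn_Icc_of_le ht.le]
      have hmeas1 : Measurable fun τ => G (τ, u τ) :=
        G.continuous.measurable.comp (measurable_id.prodMk hum)
      refine Integrable.mono' (g := fun _ => C) (integrableOn_const (measure_Icc_lt_top (a := (0:ℝ)) (b := t)).ne)
        hmeas1.aestronglyMeasurable ?_
      filter_upwards [ae_restrict_mem measurableSet_Icc] with τ hτ
      exact hC (τ, u τ) ⟨hτ, huU τ hτ⟩
    have hint2 : IntervalIntegrable M volume 0 t := hMc.intervalIntegrable 0 t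
    exact intervalIntegral.integral_mono_on ht.le hint1 hint2
      fun τ hτ => hle τ (u τ) (huU τ hτ)
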